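/- Let g be a continuous strictly positive density on [0,1] with CDF G, and let γ : [0,1] → ℝ be continuously differentiable and strictly increasing with γ(0) = 0 and γ(1) > 1; let c̄ satisfy γ(c̄) = 1 and let γ⁻¹ : [0,1] → [0,c̄] be the inverse of γ restricted to [0,c̄]. Then for every c ∈ [0, c̄): c + (∫_c^{c̄} (1 − G(γ(x))) dx)/(1 − G(γ(c))) = (∫_{γ(c)}^1 γ⁻¹(v) g(v) dv)/(1 − G(γ(c))). That is, the Baron–Myerson transfer-based price c + (∫_c^1 q*(x) dx)/q*(c) with q*(x) = 1 − G(min{γ(x),1}) equals the conditional expectation E_{ṽ∼G}[γ⁻¹(ṽ) | ṽ ≥ γ(c)]. -/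

import Mathlib

open MeasureTheory Set

/-- **Price identity in Proposition 1.** The Baron–Myerson transfer-based price
`c + (∫_c^c̄ (1 − G(γ x)) dx)/(1 − G(γ c))` equals the conditional expectation
`E[γ⁻¹(ṽ) | ṽ ≥ γ(c)]` for every active type `c < c̄`. -/
theorem stmt_4
    (g γ γinv : ℝ → ℝ) (cbar : ℝ)
    (hg_cont : ContinuousOn g (Icc 0 1))
    (hg_pos : ∀ x ∈ Icc (0:ℝ) 1, 0 < g x)
    (hg_mass : ∫ x in (0:ℝ)..1, g x = 1)
    (hγ_diff : ContDiffOn ℝ 1 γ (Icc 0 1))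
    (hγ_mono : StrictMonoOn γ (Icc 0 1))
    (hγ0 : γ 0 = 0) (hγ1 : 1 < γ 1)
    (hcbar : cbar ∈ Icc (0:ℝ) 1) (hγcbar : γ cbar = 1)
    (hinv_mem : ∀ x ∈ Icc (0:ℝ) 1, γinv x ∈ Icc 0 cbar)
    (hinv : ∀ x ∈ Icc (0:ℝ) 1, γ (γinv x) = x)
    (G : ℝ → ℝ) (hG : ∀ x, G x = ∫ s in (0:ℝ)..x, g s) :
    ∀ c ∈ Ico (0:ℝ) cbar,
      c + (∫ x in c..cbar, (1 - G (γ x))) / (1 - G (γ c))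
        = (∫ v in (γ c)..1, γinv v * g v) / (1 - G (γ c)) := by
  -- basic facts about `cbar`
  have hcbar1 : cbar < 1 := by
    rcases lt_or_eq_of_le hcbar.2 with h | h
    · exact h
    · exfalso; rw [h] at hγcbar; linarith
  have hcbar0 : 0 < cbar := by
    rcases lt_or_eq_of_le hcbar.1 with h | h
    · exact h
    · exfalso; rw [← h] at hγcbar; rw [hγ0] at hγcbar; linarith
  have hsub : Icc (0:ℝ) cbar ⊆ Icc 0 1 := Icc_subset_Icc le_rfl hcbar.2
  have hmaps : ∀ x ∈ Icc (0:ℝ) cbar, γ x ∈ Icc (0:ℝ) 1 := by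
    intro x hx
    constructor
    · rw [← hγ0]
      exact hγ_mono.monotoneOn (left_mem_Icc.2 zero_le_one) (hsub hx) hx.1
    · rw [← hγcbar]
      exact hγ_mono.monotoneOn (hsub hx) hcbar hx.2
  have hγinj : InjOn γ (Icc 0 1) := hγ_mono.injOn
  have hinvγ : ∀ x ∈ Icc (0:ℝ) cbar, γinv (γ x) = x := by
    intro x hx
    have h1 : γ x ∈ Icc (0:ℝ) 1 := hmaps x hx
    exact hγinj (hsub (hinv_mem _ h1)) (hsub hx) (hinv _ h1)
  -- extended density
  set e : ℝ → ℝ := fun x => g (min 1 (max 0 x)) with he_def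
  have hproj : ∀ x : ℝ, min 1 (max 0 x) ∈ Icc (0:ℝ) 1 := fun x =>
    ⟨le_min zero_le_one (le_max_left _ _), min_le_left _ _⟩
  have he : Continuous e := by
    apply hg_cont.comp_continuous
    · exact (continuous_const.min (continuous_const.max continuous_id))
    · exact hproj
  have heg : ∀ x ∈ Icc (0:ℝ) 1, e x = g x := by
    intro x hx
    simp only [he_def]
    rw [max_eq_right hx.1, min_eq_right hx.2]
  have hepos : ∀ x, 0 < e x := fun x => hg_pos _ (hproj x)
  -- extended CDF
  set Gt : ℝ → ℝ := fun t => ∫ s in (0:ℝ)..t, e s with hGt_def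
  have hGGt : ∀ y ∈ Icc (0:ℝ) 1, G y = Gt y := by
    intro y hy
    rw [hG]
    apply intervalIntegral.integral_congr
    intro s hs
    have : s ∈ Icc (0:ℝ) 1 := by
      rcases hs with ⟨h1, h2⟩
      constructor
      · exact le_trans (le_min le_rfl hy.1) h1
      · exact le_trans h2 (max_le zero_le_one hy.2)
    exact (heg s this).symm
  have hGt1 : Gt 1 = 1 := by
    rw [← hGGt 1 (right_mem_Icc.2 zero_le_one), hG, hg_mass]
  have hGtderiv : ∀ t, HasDerivAt Gt (e t) t := by
    intro t
    exact intervalIntegral.integral_hasDerivAt_right (he.intervalIntegrable 0 t)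
      (he.stronglyMeasurableAtFilter _ _) he.continuousAt
  have hGtcont : Continuous Gt := by
    rw [continuous_iff_continuousAt]; exact fun t => (hGtderiv t).continuousAt
  -- derivative of γ
  set γ' : ℝ → ℝ := fun x => derivWithin γ (Icc 0 1) x with hγ'_def
  have hγ'cont : ContinuousOn γ' (Icc 0 1) :=
    hγ_diff.continuousOn_derivWithin (uniqueDiffOn_Icc zero_lt_one) le_rfl
  have hγderiv : ∀ x ∈ Ioo (0:ℝ) 1, HasDerivAt γ (γ' x) x := by
    intro x hx
    have h1 : Icc (0:ℝ) 1 ∈ nhds x := Icc_mem_nhds hx.1 hx.2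
    exact (((hγ_diff.differentiableOn one_ne_zero) x (Ioo_subset_Icc_self hx)).hasDerivWithinAt).hasDerivAt h1
  have hγcont : ContinuousOn γ (Icc 0 1) := hγ_diff.continuousOn
  -- continuity of the inverse
  have hinvcont : ContinuousOn γinv (Icc 0 1) := by
    intro a ha
    rw [ContinuousWithinAt]
    apply tendsto_order.2
    constructor
    · intro b hb
      rcases le_or_gt 0 b with h0b | h0b
      · have hba : b < γinv a := hb
        have hbm : b ∈ Icc (0:ℝ) 1 :=
          ⟨h0b, le_trans (le_trans hba.le (hinv_mem a ha).2) hcbar.2⟩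
        have hγb : γ b < a := by
          rw [← hinv a ha]
          exact hγ_mono hbm (hsub (hinv_mem a ha)) hba
        have hev : ∀ᶠ x in nhds a, γ b < x := eventually_gt_nhds hγb
        filter_upwards [nhdsWithin_le_nhds hev, self_mem_nhdsWithin] with x hx hxm
        by_contra hcon
        push_neg at hcon
        have : γ (γinv x) ≤ γ b :=
          hγ_mono.monotoneOn (hsub (hinv_mem x hxm)) hbm hcon
        rw [hinv x hxm] at this
        linarith
      · filter_upwards [self_mem_nhdsWithin] with x hxm
        exact lt_of_lt_of_le h0b (hinv_mem x hxm).1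
    · intro b hb
      rcases le_or_gt b cbar with hbc | hbc
      · have hab : γinv a < b := hb
        have hbm : b ∈ Icc (0:ℝ) 1 :=
          ⟨le_trans (hinv_mem a ha).1 hab.le, le_trans hbc hcbar.2⟩
        have hγb : a < γ b := by
          rw [← hinv a ha]
          exact hγ_mono (hsub (hinv_mem a ha)) hbm hab
        have hev : ∀ᶠ x in nhds a, x < γ b := eventually_lt_nhds hγb
        filter_upwards [nhdsWithin_le_nhds hev, self_mem_nhdsWithin] with x hx hxm
        by_contra hcon
        push_neg at hcon
        have : γ b ≤ γ (γinv x) :=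
          hγ_mono.monotoneOn hbm (hsub (hinv_mem x hxm)) hcon
        rw [hinv x hxm] at this
        linarith
      · filter_upwards [self_mem_nhdsWithin] with x hxm
        exact lt_of_le_of_lt (hinv_mem x hxm).2 hbc
  -- main argument
  intro c hc
  obtain ⟨hc0, hccbar⟩ := hc
  have hcm : c ∈ Icc (0:ℝ) cbar := ⟨hc0, hccbar.le⟩
  have hγc0 : 0 ≤ γ c := (hmaps c hcm).1
  have hγc1 : γ c < 1 := by
    rw [← hγcbar]
    exact hγ_mono (hsub hcm) hcbar hccbar
  have huIcc : uIcc c cbar = Icc c cbar := uIcc_of_le hccbar.le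
  have hccsub : Icc c cbar ⊆ Icc (0:ℝ) cbar := Icc_subset_Icc hc0 le_rfl
  have hIoo : Ioo c cbar ⊆ Ioo (0:ℝ) 1 := Ioo_subset_Ioo hc0 hcbar1.le
  -- denominator positivity
  have hGγc : G (γ c) = Gt (γ c) := hGGt _ ⟨hγc0, hγc1.le⟩
  have hden : 0 < 1 - Gt (γ c) := by
    have hsplit : Gt 1 - Gt (γ c) = ∫ s in (γ c)..1, e s := by
      simp only [hGt_def]
      rw [← intervalIntegral.integral_interval_sub_left (he.intervalIntegrable 0 1)
        (he.intervalIntegrable 0 (γ c))]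
    have hpos : 0 < ∫ s in (γ c)..1, e s :=
      intervalIntegral.intervalIntegral_pos_of_pos (he.intervalIntegrable _ _)
        hepos hγc1
    rw [← hGt1]; linarith
  -- change of variables
  have hφcont : ContinuousOn (fun v => γinv v * e v) (Icc (0:ℝ) 1) :=
    hinvcont.mul he.continuousOn
  have himg : γ '' uIcc c cbar ⊆ Icc (0:ℝ) 1 := by
    rw [huIcc]
    rintro _ ⟨x, hx, rfl⟩
    exact hmaps x (hccsub hx)
  have hsubst : (∫ x in c..cbar, γ' x • ((fun v => γinv v * e v) ∘ γ) x)
      = ∫ v in (γ c)..(γ cbar), γinv v * e v := by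
    apply intervalIntegral.integral_comp_smul_deriv''
    · exact hγcont.mono (by rw [huIcc]; exact hccsub.trans hsub)
    · intro x hx
      rw [min_eq_left hccbar.le, max_eq_right hccbar.le] at hx
      exact (hγderiv x (hIoo hx)).hasDerivWithinAt
    · exact hγ'cont.mono (by rw [huIcc]; exact hccsub.trans hsub)
    · exact hφcont.mono himg
  -- rewrite LHS of the substitution
  have hsubst2 : (∫ x in c..cbar, x * e (γ x) * γ' x)
      = ∫ v in (γ c)..1, γinv v * g v := by
    have h1 : (∫ v in (γ c)..1, γinv v * g v)
        = ∫ v in (γ c)..(γ cbar), γinv v * e v := by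
      rw [hγcbar]
      apply intervalIntegral.integral_congr
      intro v hv
      have hv1 : v ∈ Icc (0:ℝ) 1 := by
        rcases hv with ⟨h1, h2⟩
        constructor
        · exact le_trans (le_min hγc0 zero_le_one) h1
        · exact le_trans h2 (max_le hγc1.le le_rfl)
      dsimp only
      rw [heg v hv1]
    rw [h1, ← hsubst]
    apply intervalIntegral.integral_congr
    intro x hx
    rw [huIcc] at hx
    have h2 : γinv (γ x) = x := hinvγ x (hccsub hx)
    simp only [Function.comp, smul_eq_mul, h2]
    ring
  -- integration by parts via FTC
  have hγcontcc : ContinuousOn γ (Icc c cbar) := hγcont.mono (hccsub.trans hsub)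
  have hΨcont : ContinuousOn (fun x => x * (1 - Gt (γ x))) (Icc c cbar) :=
    continuousOn_id.mul (continuousOn_const.sub (hGtcont.comp_continuousOn hγcontcc))
  have hΨderiv : ∀ x ∈ Ioo c cbar,
      HasDerivAt (fun x => x * (1 - Gt (γ x)))
        (1 * (1 - Gt (γ x)) + x * (-(e (γ x) * γ' x))) x := by
    intro x hx
    have h1 : HasDerivAt (fun x => Gt (γ x)) (e (γ x) * γ' x) x :=
      (hGtderiv (γ x)).comp x (hγderiv x (hIoo hx))
    exact (hasDerivAt_id x).mul (h1.const_sub 1)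
  have hintcont : ContinuousOn
      (fun x => 1 * (1 - Gt (γ x)) + x * (-(e (γ x) * γ' x))) (Icc c cbar) := by
    apply ContinuousOn.add
    · exact continuousOn_const.mul (continuousOn_const.sub (hGtcont.comp_continuousOn hγcontcc))
    · exact continuousOn_id.mul
        ((he.comp_continuousOn hγcontcc).mul (hγ'cont.mono (hccsub.trans hsub))).neg
  have hFTC : (∫ x in c..cbar, (1 * (1 - Gt (γ x)) + x * (-(e (γ x) * γ' x))))
      = cbar * (1 - Gt (γ cbar)) - c * (1 - Gt (γ c)) := by
    apply intervalIntegral.integral_eq_sub_of_hasDeriv_right_of_le hccbar.le hΨcont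
      (fun x hx => (hΨderiv x hx).hasDerivWithinAt)
    exact (hintcont.mono (by rw [huIcc])).intervalIntegrable
  have hFTC2 : (∫ x in c..cbar, (1 - Gt (γ x))) - (∫ x in c..cbar, x * e (γ x) * γ' x)
      = - (c * (1 - Gt (γ c))) := by
    have hi1 : IntervalIntegrable (fun x => 1 - Gt (γ x)) volume c cbar := by
      apply ContinuousOn.intervalIntegrable
      rw [huIcc]
      exact continuousOn_const.sub (hGtcont.comp_continuousOn hγcontcc)
    have hi2 : IntervalIntegrable (fun x => x * (-(e (γ x) * γ' x))) volume c cbar := by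
      apply ContinuousOn.intervalIntegrable
      rw [huIcc]
      exact continuousOn_id.mul
        ((he.comp_continuousOn hγcontcc).mul (hγ'cont.mono (hccsub.trans hsub))).neg
    have hsplit := intervalIntegral.integral_add hi1 hi2
    have hflip : (∫ x in c..cbar, x * (-(e (γ x) * γ' x)))
        = - ∫ x in c..cbar, x * e (γ x) * γ' x := by
      rw [← intervalIntegral.integral_neg]
      apply intervalIntegral.integral_congr
      intro x _; dsimp only; ring
    have h1cb : γ cbar = 1 := hγcbar
    have : (∫ x in c..cbar, ((1 - Gt (γ x)) + x * (-(e (γ x) * γ' x))))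
        = cbar * (1 - Gt (γ cbar)) - c * (1 - Gt (γ c)) := by
      rw [← hFTC]
      apply intervalIntegral.integral_congr
      intro x _; dsimp only; ring
    rw [hsplit, hflip] at this
    rw [h1cb, hGt1] at this
    linarith
  -- rewrite the goal integrals in terms of Gt
  have hA : (∫ x in c..cbar, (1 - G (γ x))) = ∫ x in c..cbar, (1 - Gt (γ x)) := by
    apply intervalIntegral.integral_congr
    intro x hx
    rw [huIcc] at hx
    dsimp only
    rw [hGGt _ (hmaps x (hccsub hx))]
  -- conclude
  rw [hA, hGγc]
  have hnum : c * (1 - Gt (γ c)) + (∫ x in c..cbar, (1 - Gt (γ x)))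
      = ∫ v in (γ c)..1, γinv v * g v := by
    rw [← hsubst2]; linarith
  field_simp
  linarith [hnum, mul_comm c (1 - Gt (γ c))]
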